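/- Martingale characterization by stopping times on time scales: Let 𝕋 be a bounded time scale with minimum 0 and maximum b ∈ 𝕋, and let X = (X_t)_{t∈𝕋} be a right-continuous adapted process with respect to a filtration (ℱ_t)_{t∈𝕋} on a probability space (Ω, 𝒜, P) such that X_S is integrable for every stopping time S. Then X is a martingale if and only if E[X_S] = E[X_0] for every stopping time S relative to (ℱ_t). -/

import Mathlib

open MeasureTheory Filter Set Topology

private lemma aux_eq_meas {Ω : Type*} {mΩ : MeasurableSpace Ω} {ι : Type*} [LinearOrder ι]
    (ℱ : Filtration ι mΩ) {R : Ω → ι} (hR : IsStoppingTime ℱ (fun ω => (R ω : WithTop ι))) (F : Finset ι)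
    (hrange : ∀ ω, R ω ∈ F) (t : ι) :
    MeasurableSet[ℱ t] {ω | R ω = t} := by
  classical
  have hset : {ω | R ω = t}
      = {ω | R ω ≤ t} \ ⋃ t' ∈ F.filter (fun x => x < t), {ω | R ω ≤ t'} := by
    ext ω
    simp only [Set.mem_setOf_eq, Set.mem_diff, Set.mem_iUnion, Finset.mem_filter,
      exists_prop, not_exists, not_and]
    constructor
    · rintro rfl
      exact ⟨le_rfl, fun t' ht' hle => absurd (le_antisymm hle ht'.2.le)
        fun h => absurd ht'.2 (by rw [h]; exact lt_irrefl _)⟩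
    · rintro ⟨h1, h2⟩
      rcases h1.lt_or_eq with h | h
      · exact absurd le_rfl (h2 (R ω) ⟨hrange ω, h⟩)
      · exact h
  have hR' : ∀ t, MeasurableSet[ℱ t] {ω | R ω ≤ t} := fun t => by
    have := hR t; simp only [WithTop.coe_le_coe] at this; exact this
  rw [hset]
  exact (hR' t).diff (MeasurableSet.biUnion (F.filter (fun x => x < t)).countable_toSet
    (fun t' ht' => ℱ.mono (Finset.mem_filter.mp (Finset.mem_coe.mp ht')).2.le _ (hR' t')))

private lemma aux_key {Ω : Type*} {mΩ : MeasurableSpace Ω} {T : Set ℝ} {b : ℝ} (hbT : b ∈ T)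
    (hsub : T ⊆ Set.Icc 0 b)
    (P : Measure Ω) [IsProbabilityMeasure P] (ℱ : Filtration ↥T mΩ) {X : ↥T → Ω → ℝ}
    (hM : Martingale X ℱ P) {R : Ω → ↥T} (hR : IsStoppingTime ℱ (fun ω => (R ω : WithTop ↥T))) (F : Finset ↥T)
    (hrange : ∀ ω, R ω ∈ F) (hRint : Integrable (fun ω => X (R ω) ω) P)
    {A : Set Ω} (hA : MeasurableSet[hR.measurableSpace] A) :
    ∫ ω in A, X (R ω) ω ∂P = ∫ ω in A, X ⟨b, hbT⟩ ω ∂P := by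
  classical
  have hbtop : ∀ t : ↥T, t ≤ ⟨b, hbT⟩ := fun t => Subtype.coe_le_coe.mp (hsub t.2).2
  have hAt : ∀ t, MeasurableSet[ℱ t] (A ∩ {ω | R ω = t}) := by
    intro t
    have h1 : MeasurableSet[hR.measurableSpace] {ω | (R ω : WithTop ↥T) = t} := by
      have := (hR.measurableSet_inter_eq_iff Set.univ t).mpr
        (by simpa using aux_eq_meas ℱ hR F hrange t)
      simpa using this
    simpa using (hR.measurableSet_inter_eq_iff A t).mp (hA.inter h1)
  have hAtm : ∀ t, MeasurableSet (A ∩ {ω | R ω = t}) := fun t => ℱ.le t _ (hAt t)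
  have hcover : A = ⋃ t ∈ F, A ∩ {ω | R ω = t} := by
    ext ω
    simp only [Set.mem_iUnion, Set.mem_inter_iff, Set.mem_setOf_eq, exists_prop]
    exact ⟨fun h => ⟨R ω, hrange ω, h, rfl⟩, fun ⟨t, _, h, _⟩ => h⟩
  have hdisj : (↑F : Set ↥T).Pairwise (Function.onFun Disjoint
      fun t => A ∩ {ω | R ω = t}) := by
    intro t _ t' _ hne
    exact Set.disjoint_left.mpr fun ω h1 h2 => hne (h1.2.symm.trans h2.2)
  calc ∫ ω in A, X (R ω) ω ∂P
      = ∑ t ∈ F, ∫ ω in A ∩ {ω | R ω = t}, X (R ω) ω ∂P := by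
        nth_rewrite 1 [hcover]
        exact integral_biUnion_finset F (fun t _ => hAtm t) hdisj
          (fun t _ => hRint.integrableOn)
    _ = ∑ t ∈ F, ∫ ω in A ∩ {ω | R ω = t}, X ⟨b, hbT⟩ ω ∂P := by
        refine Finset.sum_congr rfl fun t _ => ?_
        rw [setIntegral_congr_fun (hAtm t) (fun ω hω => by
          show X (R ω) ω = X t ω; rw [show R ω = t from hω.2])]
        exact hM.setIntegral_eq (hbtop t) (hAt t)
    _ = ∫ ω in A, X ⟨b, hbT⟩ ω ∂P := by
        nth_rewrite 2 [hcover]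
        exact (integral_biUnion_finset F (fun t _ => hAtm t) hdisj
          (fun t _ => (hM.integrable _).integrableOn)).symm


set_option maxHeartbeats 1000000 in
/-- Martingale characterization by stopping times on time scales: a right-continuous
adapted process `X` on a bounded time scale `T` (min `0`, max `b`) whose stopped values
are all integrable is a martingale if and only if `E[X_S] = E[X_0]` for every stopping
time `S`. -/
theorem stmt_5 (T : Set ℝ) (hcl : IsClosed T) (b : ℝ) (h0T : (0 : ℝ) ∈ T) (hbT : b ∈ T)
    (hsub : T ⊆ Set.Icc 0 b)
    {Ω : Type*} {mΩ : MeasurableSpace Ω} (P : Measure Ω) [IsProbabilityMeasure P]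
    (ℱ : Filtration ↥T mΩ) (X : ↥T → Ω → ℝ)
    (hadp : Adapted ℱ X)
    (hrc : ∀ ω, ∀ t : ↥T, ContinuousWithinAt (fun s : ↥T => X s ω) (Set.Ici t) t)
    (hint : ∀ S : Ω → ↥T, IsStoppingTime ℱ (fun ω => (S ω : WithTop ↥T)) → Integrable (fun ω => X (S ω) ω) P) :
    Martingale X ℱ P ↔
      ∀ S : Ω → ↥T, IsStoppingTime ℱ (fun ω => (S ω : WithTop ↥T)) →
        ∫ ω, X (S ω) ω ∂P = ∫ ω, X ⟨0, h0T⟩ ω ∂P := by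
  constructor
  · intro hM S hS
    classical
    set bT : ↥T := ⟨b, hbT⟩ with hbTdef
    have hbtop : ∀ t : ↥T, t ≤ bT := fun t => Subtype.coe_le_coe.mp (hsub t.2).2
    have hnonneg : ∀ t : ↥T, (0:ℝ) ≤ (t:ℝ) := fun t => (hsub t.2).1
    have hbdd : BddAbove T := ⟨b, fun x hx => (hsub hx).2⟩
    have hlam_mem : ∀ u : ℝ, sSup (T ∩ Set.Iic u) ∈ T := by
      intro u
      rcases (T ∩ Set.Iic u).eq_empty_or_nonempty with h | h
      · rw [h, Real.sSup_empty]; exact h0T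
      · exact ((hcl.inter isClosed_Iic).csSup_mem h (hbdd.mono Set.inter_subset_left)).1
    set lam : ℝ → ↥T := fun u => ⟨sSup (T ∩ Set.Iic u), hlam_mem u⟩ with hlamdef
    have hlam_le : ∀ u : ℝ, 0 ≤ u → (lam u : ℝ) ≤ u := fun u hu =>
      csSup_le ⟨0, h0T, hu⟩ (fun x hx => hx.2)
    have hlam_ge : ∀ (u : ℝ) (s : ↥T), (s : ℝ) ≤ u → s ≤ lam u := fun u s hs =>
      le_csSup (hbdd.mono Set.inter_subset_left) ⟨s.2, hs⟩
    have hlam0 : lam 0 = ⟨0, h0T⟩ :=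
      le_antisymm (Subtype.coe_le_coe.mp (hlam_le 0 le_rfl))
        (hlam_ge 0 ⟨0, h0T⟩ le_rfl)
    set G : ℕ → Finset ↥T := fun n =>
      (Finset.range (⌈b * 2^n⌉₊ + 1)).image (fun k : ℕ => lam ((k : ℝ) / 2^n)) with hGdef
    have h2pos : ∀ n : ℕ, (0:ℝ) < 2^n := fun n => by positivity
    have hgrid : ∀ (n : ℕ) (s : ↥T), ∃ g ∈ G n, s ≤ g ∧ (g : ℝ) ≤ (s : ℝ) + (2^n)⁻¹ := by
      intro n s
      refine ⟨lam ((⌈(s:ℝ) * 2^n⌉₊ : ℝ) / 2^n), ?_, ?_, ?_⟩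
      · refine Finset.mem_image.mpr ⟨⌈(s:ℝ) * 2^n⌉₊, Finset.mem_range.mpr ?_, rfl⟩
        exact Nat.lt_succ_of_le (Nat.ceil_le_ceil
          (mul_le_mul_of_nonneg_right (hsub s.2).2 (h2pos n).le))
      · refine hlam_ge _ s ?_
        rw [le_div_iff₀ (h2pos n)]
        exact Nat.le_ceil _
      · have h1 : (lam (⌈(s:ℝ) * 2^n⌉₊ / 2^n) : ℝ) ≤ ⌈(s:ℝ) * 2^n⌉₊ / 2^n :=
          hlam_le _ (by positivity)
        have h2 : (⌈(s:ℝ) * 2^n⌉₊ : ℝ) < (s:ℝ) * 2^n + 1 :=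
          Nat.ceil_lt_add_one (mul_nonneg (hnonneg s) (h2pos n).le)
        have h3 : ((2:ℝ)^n)⁻¹ * 2^n = 1 := inv_mul_cancel₀ (h2pos n).ne'
        refine le_trans h1 ?_
        rw [div_le_iff₀ (h2pos n)]
        nlinarith
    have hGfne : ∀ (n : ℕ) (s : ↥T), ((G n).filter fun g => s ≤ g).Nonempty := by
      intro n s
      obtain ⟨g, hg, hge, _⟩ := hgrid n s
      exact ⟨g, Finset.mem_filter.mpr ⟨hg, hge⟩⟩
    set Sn : ℕ → Ω → ↥T := fun n ω =>
      ((G n).filter fun g => S ω ≤ g).min' (hGfne n (S ω)) with hSndef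
    have hSn_mem : ∀ n ω, Sn n ω ∈ (G n).filter fun g => S ω ≤ g :=
      fun n ω => Finset.min'_mem _ _
    have hSn_ge : ∀ n ω, S ω ≤ Sn n ω := fun n ω => (Finset.mem_filter.mp (hSn_mem n ω)).2
    have hSn_G : ∀ n ω, Sn n ω ∈ G n := fun n ω => (Finset.mem_filter.mp (hSn_mem n ω)).1
    have hSn_le : ∀ n ω, (Sn n ω : ℝ) ≤ (S ω : ℝ) + (2^n)⁻¹ := by
      intro n ω
      obtain ⟨g, hg, hge, hle⟩ := hgrid n (S ω)
      exact le_trans (Subtype.coe_le_coe.mpr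
        (Finset.min'_le _ g (Finset.mem_filter.mpr ⟨hg, hge⟩))) hle
    have h0G : ∀ n, (⟨0, h0T⟩ : ↥T) ∈ G n := by
      intro n
      refine Finset.mem_image.mpr ⟨0, Finset.mem_range.mpr (Nat.succ_pos _), ?_⟩
      have h00 : ((0:ℕ):ℝ) / 2^n = 0 := by norm_num
      rw [h00, hlam0]
    have hSstop : ∀ n, IsStoppingTime ℱ (fun ω => (Sn n ω : WithTop ↥T)) := by
      intro n u
      simp only [WithTop.coe_le_coe]
      have h0u : (⟨0, h0T⟩ : ↥T) ≤ u := Subtype.coe_le_coe.mp (hnonneg u)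
      have hne2 : ((G n).filter fun g => g ≤ u).Nonempty :=
        ⟨⟨0, h0T⟩, Finset.mem_filter.mpr ⟨h0G n, h0u⟩⟩
      set g0 : ↥T := ((G n).filter fun g => g ≤ u).max' hne2 with hg0def
      have hg0mem : g0 ∈ (G n).filter fun g => g ≤ u := Finset.max'_mem _ hne2
      have hg0G : g0 ∈ G n := (Finset.mem_filter.mp hg0mem).1
      have hg0le : g0 ≤ u := (Finset.mem_filter.mp hg0mem).2
      have hkey : {ω | Sn n ω ≤ u} = {ω | S ω ≤ g0} := by
        ext ω
        simp only [Set.mem_setOf_eq]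
        constructor
        · intro hle
          have hmem : Sn n ω ∈ (G n).filter fun g => g ≤ u :=
            Finset.mem_filter.mpr ⟨hSn_G n ω, hle⟩
          exact le_trans (hSn_ge n ω) (Finset.le_max' _ _ hmem)
        · intro hle
          have hmem : g0 ∈ (G n).filter fun g => S ω ≤ g := Finset.mem_filter.mpr ⟨hg0G, hle⟩
          exact le_trans (Finset.min'_le _ _ hmem) hg0le
      rw [hkey]
      exact ℱ.mono hg0le _ (by have := hS g0; simp only [WithTop.coe_le_coe] at this; exact this)
    have hptws : ∀ ω, Tendsto (fun n => X (Sn n ω) ω) atTop (𝓝 (X (S ω) ω)) := by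
      intro ω
      have hupper : Tendsto (fun n : ℕ => (S ω : ℝ) + (2^n)⁻¹) atTop (𝓝 ((S ω : ℝ) + 0)) := by
        refine Tendsto.const_add _ ?_
        simpa [inv_pow] using tendsto_pow_atTop_nhds_zero_of_lt_one
          (by norm_num : (0:ℝ) ≤ (2:ℝ)⁻¹) (by norm_num : (2:ℝ)⁻¹ < 1)
      rw [add_zero] at hupper
      have hcoe : Tendsto (fun n => ((Sn n ω : ↥T) : ℝ)) atTop (𝓝 ((S ω : ℝ))) :=
        tendsto_of_tendsto_of_tendsto_of_le_of_le tendsto_const_nhds hupper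
          (fun n => Subtype.coe_le_coe.mpr (hSn_ge n ω)) (fun n => hSn_le n ω)
      have hT : Tendsto (fun n => Sn n ω) atTop (𝓝 (S ω)) := tendsto_subtype_rng.mpr hcoe
      have hTw : Tendsto (fun n => Sn n ω) atTop (𝓝[Set.Ici (S ω)] (S ω)) :=
        tendsto_nhdsWithin_iff.mpr ⟨hT, Filter.Eventually.of_forall (fun n => hSn_ge n ω)⟩
      exact Filter.Tendsto.comp (hrc ω (S ω)) hTw
    have hGle : ∀ n, (hSstop n).measurableSpace ≤ mΩ := fun n =>
      (hSstop n).measurableSpace_le_of_le (fun ω => WithTop.coe_le_coe.mpr (hbtop (Sn n ω)))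
    have hmeasSn : ∀ n, StronglyMeasurable[(hSstop n).measurableSpace]
        (fun ω => X (Sn n ω) ω) := by
      intro n
      refine Measurable.stronglyMeasurable (fun s hs => ?_)
      have hpre : (fun ω => X (Sn n ω) ω) ⁻¹' s
          = ⋃ t ∈ G n, ({ω | Sn n ω = t} ∩ X t ⁻¹' s) := by
        ext ω
        simp only [Set.mem_preimage, Set.mem_iUnion, Set.mem_inter_iff, Set.mem_setOf_eq,
          exists_prop]
        constructor
        · intro h; exact ⟨Sn n ω, hSn_G n ω, rfl, h⟩
        · rintro ⟨t, _, ht, h⟩; rw [ht]; exact h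
      rw [hpre]
      refine MeasurableSet.biUnion (G n).countable_toSet (fun t _ => ?_)
      rw [IsStoppingTime.measurableSet]
      refine ⟨le_iSup ℱ t _ ((aux_eq_meas ℱ (hSstop n) (G n) (hSn_G n) t).inter (hadp t hs)), fun u => ?_⟩
      simp only [WithTop.coe_le_coe]
      by_cases htu : t ≤ u
      · have heq : ({ω | Sn n ω = t} ∩ X t ⁻¹' s) ∩ {ω | Sn n ω ≤ u}
            = {ω | Sn n ω = t} ∩ X t ⁻¹' s := by
          ext ω
          simp only [Set.mem_inter_iff, Set.mem_setOf_eq, Set.mem_preimage, and_iff_left_iff_imp]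
          rintro ⟨h1, _⟩
          rw [h1]; exact htu
        rw [heq]
        exact ℱ.mono htu _ ((aux_eq_meas ℱ (hSstop n) (G n) (hSn_G n) t).inter
          (hadp t hs))
      · have heq : ({ω | Sn n ω = t} ∩ X t ⁻¹' s) ∩ {ω | Sn n ω ≤ u} = ∅ := by
          ext ω
          simp only [Set.mem_inter_iff, Set.mem_setOf_eq, Set.mem_preimage,
            Set.mem_empty_iff_false, iff_false, not_and]
          rintro ⟨h1, _⟩ h2
          exact htu (h1 ▸ h2)
        rw [heq]
        exact @MeasurableSet.empty _ (ℱ u)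
    have hce : ∀ n, (fun ω => X (Sn n ω) ω) =ᵐ[P] P[X bT | (hSstop n).measurableSpace] := by
      intro n
      exact ae_eq_condExp_of_forall_setIntegral_eq (hGle n) (hM.integrable bT)
        (fun A _ _ => (hint _ (hSstop n)).integrableOn)
        (fun A hA _ => aux_key hbT hsub P ℱ hM (hSstop n) (G n) (hSn_G n)
          (hint _ (hSstop n)) hA)
        (hmeasSn n).aestronglyMeasurable
    have hunif : UnifIntegrable (fun n ω => X (Sn n ω) ω) 1 P :=
      ((hM.integrable bT).uniformIntegrable_condExp hGle).2.1.ae_eq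
        (fun n => (hce n).symm)
    have hLp := tendsto_Lp_finite_of_tendsto_ae (le_refl (1 : ENNReal)) ENNReal.one_ne_top
      (fun n => (hint _ (hSstop n)).aestronglyMeasurable)
      (memLp_one_iff_integrable.mpr (hint S hS))
      hunif (Filter.Eventually.of_forall hptws)
    have hIntTd := tendsto_integral_of_L1' (fun ω => X (S ω) ω) (hint S hS).aestronglyMeasurable
      (Filter.Eventually.of_forall (fun n => hint _ (hSstop n))) hLp
    have hconstval : ∀ n, ∫ ω, X (Sn n ω) ω ∂P = ∫ ω, X bT ω ∂P := by
      intro n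
      have := aux_key hbT hsub P ℱ hM (hSstop n) (G n) (hSn_G n) (hint _ (hSstop n))
        (@MeasurableSet.univ _ (hSstop n).measurableSpace)
      simpa [Measure.restrict_univ] using this
    have hfinal : ∫ ω, X (S ω) ω ∂P = ∫ ω, X bT ω ∂P := by
      refine tendsto_nhds_unique hIntTd ?_
      have : (fun n => ∫ ω, X (Sn n ω) ω ∂P) = fun _ => ∫ ω, X bT ω ∂P :=
        funext hconstval
      rw [this]
      exact tendsto_const_nhds
    have h0b : ∫ ω, X (⟨0, h0T⟩ : ↥T) ω ∂P = ∫ ω, X bT ω ∂P := by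
      have := aux_key hbT hsub P ℱ hM (isStoppingTime_const ℱ ⟨0, h0T⟩) {(⟨0, h0T⟩ : ↥T)}
        (fun _ => Finset.mem_singleton_self _) (hM.integrable _)
        (@MeasurableSet.univ _ (isStoppingTime_const ℱ (⟨0, h0T⟩ : ↥T)).measurableSpace)
      simpa [Measure.restrict_univ] using this
    rw [hfinal, h0b]
  · intro h
    classical
    have hconst : ∀ t : ↥T, IsStoppingTime ℱ (fun _ => (t : WithTop ↥T)) := fun t => isStoppingTime_const ℱ t
    have hXint : ∀ t : ↥T, Integrable (X t) P := fun t => hint _ (hconst t)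
    refine ⟨hadp.stronglyAdapted, fun i j hij => ?_⟩
    have hSF : SigmaFinite (P.trim (ℱ.le i)) := by infer_instance
    refine (ae_eq_condExp_of_forall_setIntegral_eq (ℱ.le i) (hXint j)
      (fun s _ _ => (hXint i).integrableOn) (fun A hA _ => ?_)
      (StronglyMeasurable.aestronglyMeasurable (hadp.stronglyAdapted i))).symm
    -- define the stopping time i on A, j off A
    set R : Ω → ↥T := fun ω => if ω ∈ A then i else j with hRdef
    have hR : IsStoppingTime ℱ (fun ω => (R ω : WithTop ↥T)) := by
      intro u
      simp only [WithTop.coe_le_coe]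
      by_cases hju : j ≤ u
      · have hiu : i ≤ u := hij.trans hju
        have : {ω | R ω ≤ u} = Set.univ := by
          ext ω; simp only [hRdef, Set.mem_setOf_eq, Set.mem_univ, iff_true]
          by_cases hω : ω ∈ A <;> simp [hω, hiu, hju]
        rw [this]; exact @MeasurableSet.univ _ (ℱ u)
      · by_cases hiu : i ≤ u
        · have : {ω | R ω ≤ u} = A := by
            ext ω; simp only [hRdef, Set.mem_setOf_eq]
            by_cases hω : ω ∈ A <;> simp [hω, hiu, hju]
          rw [this]; exact ℱ.mono hiu _ hA
        · have : {ω | R ω ≤ u} = ∅ := by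
            ext ω; simp only [hRdef, Set.mem_setOf_eq, Set.mem_empty_iff_false, iff_false]
            by_cases hω : ω ∈ A <;> simp [hω, hiu, hju]
          rw [this]; exact @MeasurableSet.empty _ (ℱ u)
    have hAm : MeasurableSet A := ℱ.le i _ hA
    have hsplitR : ∫ ω, X (R ω) ω ∂P
        = ∫ ω in A, X i ω ∂P + ∫ ω in Aᶜ, X j ω ∂P := by
      rw [← integral_add_compl hAm (hint R hR)]
      congr 1
      · exact setIntegral_congr_fun hAm (fun ω hω => by
          show X (R ω) ω = X i ω; rw [hRdef]; simp [hω])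
      · exact setIntegral_congr_fun hAm.compl (fun ω hω => by
          show X (R ω) ω = X j ω; rw [hRdef]; simp [show ω ∉ A from hω])
    have hsplitj : ∫ ω, X j ω ∂P = ∫ ω in A, X j ω ∂P + ∫ ω in Aᶜ, X j ω ∂P :=
      (integral_add_compl hAm (hXint j)).symm
    have h1 := h R hR
    have h2 := h (fun _ => j) (hconst j)
    have : ∫ ω in A, X i ω ∂P + ∫ ω in Aᶜ, X j ω ∂P
        = ∫ ω in A, X j ω ∂P + ∫ ω in Aᶜ, X j ω ∂P := by
      rw [← hsplitR, ← hsplitj, h1, h2]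
    linarith
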